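/- arXiv:2002.08739 — 4 statements merged into one kernel-verified Lean document; each statement's English description precedes it below -/
import Mathlib

section
/- Let G be a finite connected simple graph with n ≥ 4 vertices and let H = H(G) be the graph obtained from G by one step of the half-model. Then H is 2-connected; that is, H has at least 3 vertices and for every vertex w of H, the graph obtained from H by deleting w is connected. -/
open SimpleGraph

/-- The set of "clones": one new vertex for each subset of `V` of size `⌊|V|/2⌋`. -/
abbrev halfClones (V : Type) [Fintype V] [DecidableEq V] : Type :=
  {S : Finset V // S.card = Fintype.card V / 2}

/-- One step of the half-model: old vertices keep their adjacencies; the clone `v_S`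
is adjacent exactly to the members of `S`; clones form an independent set. -/
def halfStep {V : Type} [Fintype V] [DecidableEq V] (G : SimpleGraph V) :
    SimpleGraph (V ⊕ halfClones V) where
  Adj x y :=
    match x, y with
    | Sum.inl u, Sum.inl v => G.Adj u v
    | Sum.inl u, Sum.inr S => u ∈ S.1
    | Sum.inr S, Sum.inl u => u ∈ S.1
    | Sum.inr _, Sum.inr _ => False
  symm := by
    constructor
    rintro (u | S) (v | T) h
    · exact G.adj_symm h
    · exact h
    · exact h
    · exact h.elim
  loopless := by
    constructor
    rintro (u | S) h
    · exact G.irrefl h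
    · exact h.elim

instance halfStep.instDecidableRelAdj {V : Type} [Fintype V] [DecidableEq V]
    (G : SimpleGraph V) [DecidableRel G.Adj] : DecidableRel (halfStep G).Adj
  | Sum.inl u, Sum.inl v => inferInstanceAs (Decidable (G.Adj u v))
  | Sum.inl u, Sum.inr S => inferInstanceAs (Decidable (u ∈ S.1))
  | Sum.inr S, Sum.inl u => inferInstanceAs (Decidable (u ∈ S.1))
  | Sum.inr _, Sum.inr _ => inferInstanceAs (Decidable False)

/-- if `G` is connected with at least `4` vertices, then `H = H(G)` is
2-connected: it has at least 3 vertices and deleting any single vertex leaves a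
connected graph. -/
theorem stmt_6 {V : Type} [Fintype V] [DecidableEq V] (G : SimpleGraph V)
    (hn : 4 ≤ Fintype.card V) (hG : G.Connected) :
    3 ≤ Fintype.card (V ⊕ halfClones V) ∧
      ∀ w : V ⊕ halfClones V,
        ((halfStep G).induce ({w}ᶜ : Set (V ⊕ halfClones V))).Connected := by
  have hk2 : 2 ≤ Fintype.card V / 2 := by omega
  have hkn : Fintype.card V / 2 ≤ Fintype.card V := by omega
  constructor
  · calc (3 : ℕ) ≤ Fintype.card V := by omega
      _ ≤ Fintype.card (V ⊕ halfClones V) := by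
          rw [Fintype.card_sum]; exact Nat.le_add_right _ _
  intro w
  set s : Set (V ⊕ halfClones V) := {w}ᶜ with hs
  rw [SimpleGraph.connected_iff]
  refine ⟨?_, ?_⟩
  swap
  · obtain ⟨x, hx⟩ := Fintype.exists_ne_of_one_lt_card
      (by rw [Fintype.card_sum]; omega) w
    exact ⟨⟨x, by simp [hs, hx]⟩⟩
  cases w with
  | inl u =>
    have reach_old : ∀ (v v' : V) (hv : Sum.inl v ∈ s) (hv' : Sum.inl v' ∈ s),
        ((halfStep G).induce s).Reachable ⟨Sum.inl v, hv⟩ ⟨Sum.inl v', hv'⟩ := by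
      intro v v' hv hv'
      have hcard2 : ({v, v'} : Finset V).card ≤ Fintype.card V / 2 := by
        have := Finset.card_insert_le v ({v'} : Finset V)
        simp at this
        omega
      obtain ⟨S, hSsub, hScard⟩ := Finset.exists_superset_card_eq hcard2 hkn
      have hvS : v ∈ S := hSsub (by simp)
      have hv'S : v' ∈ S := hSsub (by simp)
      have hS : (Sum.inr (⟨S, hScard⟩ : halfClones V) : V ⊕ halfClones V) ∈ s := by
        simp [hs]
      have h1 : ((halfStep G).induce s).Adj ⟨Sum.inl v, hv⟩ ⟨Sum.inr ⟨S, hScard⟩, hS⟩ := hvS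
      have h2 : ((halfStep G).induce s).Adj ⟨Sum.inr ⟨S, hScard⟩, hS⟩ ⟨Sum.inl v', hv'⟩ := hv'S
      exact h1.reachable.trans h2.reachable
    have reduce : ∀ (x : s), ∃ (v : V) (hv : Sum.inl v ∈ s),
        ((halfStep G).induce s).Reachable x ⟨Sum.inl v, hv⟩ := by
      rintro ⟨(v | S), hx⟩
      · exact ⟨v, hx, Reachable.refl _⟩
      · have hcard : 1 < S.1.card := by rw [S.2]; omega
        obtain ⟨m, hm, hmu⟩ := Finset.exists_mem_ne hcard u
        have hms : (Sum.inl m : V ⊕ halfClones V) ∈ s := by simp [hs, hmu]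
        have hadj : ((halfStep G).induce s).Adj ⟨Sum.inr S, hx⟩ ⟨Sum.inl m, hms⟩ := hm
        exact ⟨m, hms, hadj.reachable⟩
    intro a b
    obtain ⟨v, hv, ha⟩ := reduce a
    obtain ⟨v', hv', hb⟩ := reduce b
    exact ha.trans ((reach_old v v' hv hv').trans hb.symm)
  | inr S0 =>
    have hmem : ∀ v : V, (Sum.inl v : V ⊕ halfClones V) ∈ s := by
      intro v; simp [hs]
    let f : G →g ((halfStep G).induce s) :=
      { toFun := fun v => ⟨Sum.inl v, hmem v⟩
        map_rel' := fun h => h }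
    have reduce : ∀ (x : s), ∃ v : V,
        ((halfStep G).induce s).Reachable x ⟨Sum.inl v, hmem v⟩ := by
      rintro ⟨(v | S), hx⟩
      · exact ⟨v, Reachable.refl _⟩
      · have hcard : 0 < S.1.card := by rw [S.2]; omega
        obtain ⟨m, hm⟩ := Finset.card_pos.mp hcard
        have hadj : ((halfStep G).induce s).Adj ⟨Sum.inr S, hx⟩ ⟨Sum.inl m, hmem m⟩ := hm
        exact ⟨m, hadj.reachable⟩
    intro a b
    obtain ⟨v, ha⟩ := reduce a
    obtain ⟨v', hb⟩ := reduce b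
    exact ha.trans (((hG.preconnected v v').map f).trans hb.symm)
end

section
/- Let G_0 be any finite simple graph with at least one vertex, and let (G_t) be the iterated half-model sequence starting from G_0. Then for every t ≥ 4, the graph G_t is 2-connected; that is, G_t has at least 3 vertices and deleting any single vertex of G_t leaves a connected graph. -/
open SimpleGraph

/-- A finite simple graph, bundled with its vertex type and instances. -/
structure FinGraph where
  V : Type
  fin : Fintype V
  dec : DecidableEq V
  G : SimpleGraph V

/-- One step of the half-model on a bundled finite graph. -/
def FinGraph.step (X : FinGraph) : FinGraph :=
  letI := X.fin
  letI := X.dec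
  { V := X.V ⊕ halfClones X.V
    fin := inferInstance
    dec := inferInstance
    G := halfStep X.G }

/-- The number of vertices of a bundled finite graph. -/
def FinGraph.order (X : FinGraph) : ℕ :=
  letI := X.fin
  Fintype.card X.V

/-- 2-connectedness of a bundled finite graph: at least 3 vertices, and deleting any
single vertex leaves a connected graph. -/
def FinGraph.TwoConnected (X : FinGraph) : Prop :=
  letI := X.fin
  3 ≤ Fintype.card X.V ∧ ∀ w : X.V, (X.G.induce ({w}ᶜ : Set X.V)).Connected


section Aux

variable {V : Type} [Fintype V] [DecidableEq V]

lemma exists_clone (hV : 6 ≤ Fintype.card V) (u v : V) (w : V ⊕ halfClones V) :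
    ∃ S : halfClones V, u ∈ S.1 ∧ v ∈ S.1 ∧ Sum.inr S ≠ w := by
  have hcard2 : ({u, v} : Finset V).card ≤ 2 :=
    (Finset.card_insert_le _ _).trans (by simp)
  have hk : ({u, v} : Finset V).card ≤ Fintype.card V / 2 := by omega
  have hk' : Fintype.card V / 2 ≤ (Finset.univ : Finset V).card := by
    rw [Finset.card_univ]; omega
  obtain ⟨S₀, hsub, -, hS₀⟩ :=
    Finset.exists_subsuperset_card_eq (Finset.subset_univ ({u, v} : Finset V)) hk hk'
  have huS₀ : u ∈ S₀ := hsub (by simp)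
  have hvS₀ : v ∈ S₀ := hsub (by simp)
  by_cases hw : Sum.inr (⟨S₀, hS₀⟩ : halfClones V) ≠ w
  · exact ⟨⟨S₀, hS₀⟩, huS₀, hvS₀, hw⟩
  · push_neg at hw
    -- swap an element: pick x ∈ S₀ \ {u,v} and y ∉ S₀
    have hnsub : ¬ S₀ ⊆ ({u, v} : Finset V) := by
      intro hs
      have := Finset.card_le_card hs
      omega
    obtain ⟨x, hx⟩ := Finset.sdiff_nonempty.mpr hnsub
    rw [Finset.mem_sdiff] at hx
    have hcompl : (S₀ᶜ : Finset V).Nonempty := by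
      rw [← Finset.card_pos, Finset.card_compl]
      omega
    obtain ⟨y, hy⟩ := hcompl
    rw [Finset.mem_compl] at hy
    set S₁ : Finset V := insert y (S₀.erase x) with hS₁def
    have hyx : y ∉ S₀.erase x := fun hc => hy (Finset.mem_of_mem_erase hc)
    have hS₁card : S₁.card = Fintype.card V / 2 := by
      rw [hS₁def, Finset.card_insert_of_notMem hyx, Finset.card_erase_of_mem hx.1, hS₀]
      omega
    have hux : u ≠ x := fun hc => hx.2 (by simp [← hc])
    have hvx : v ≠ x := fun hc => hx.2 (by simp [← hc])
    refine ⟨⟨S₁, hS₁card⟩, ?_, ?_, ?_⟩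
    · exact Finset.mem_insert_of_mem (Finset.mem_erase.mpr ⟨hux, huS₀⟩)
    · exact Finset.mem_insert_of_mem (Finset.mem_erase.mpr ⟨hvx, hvS₀⟩)
    · rw [← hw]
      intro hc
      have : S₁ = S₀ := congrArg Subtype.val (Sum.inr_injective hc)
      have : y ∈ S₀ := this ▸ Finset.mem_insert_self y _
      exact hy this

lemma exists_mem_clone_ne (hV : 6 ≤ Fintype.card V) (S : halfClones V)
    (w : V ⊕ halfClones V) : ∃ u ∈ S.1, Sum.inl u ≠ w := by
  have hScard : S.1.card = Fintype.card V / 2 := S.2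
  cases w with
  | inl z =>
    have : ¬ S.1 ⊆ ({z} : Finset V) := by
      intro hs
      have := Finset.card_le_card hs
      simp at this
      omega
    obtain ⟨x, hx⟩ := Finset.sdiff_nonempty.mpr this
    rw [Finset.mem_sdiff, Finset.mem_singleton] at hx
    exact ⟨x, hx.1, by simpa using hx.2⟩
  | inr T =>
    have : S.1.Nonempty := by rw [← Finset.card_pos]; omega
    obtain ⟨x, hx⟩ := this
    exact ⟨x, hx, by simp⟩

lemma halfStep_del_connected (G : SimpleGraph V) (hV : 6 ≤ Fintype.card V)
    (w : V ⊕ halfClones V) :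
    ((halfStep G).induce ({w}ᶜ : Set (V ⊕ halfClones V))).Connected := by
  set H := (halfStep G).induce ({w}ᶜ : Set (V ⊕ halfClones V)) with hH
  have memc : ∀ x : V ⊕ halfClones V, x ≠ w → x ∈ ({w}ᶜ : Set (V ⊕ halfClones V)) := by
    intro x hx
    simp [hx]
  -- old vertices are pairwise reachable
  have key : ∀ (u v : V) (hu : Sum.inl u ∈ ({w}ᶜ : Set (V ⊕ halfClones V)))
      (hv : Sum.inl v ∈ ({w}ᶜ : Set (V ⊕ halfClones V))),
      H.Reachable ⟨Sum.inl u, hu⟩ ⟨Sum.inl v, hv⟩ := by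
    intro u v hu hv
    obtain ⟨S, huS, hvS, hSw⟩ := exists_clone hV u v w
    have hSmem : (Sum.inr S : V ⊕ halfClones V) ∈ ({w}ᶜ : Set (V ⊕ halfClones V)) :=
      memc _ hSw
    have h1 : H.Adj ⟨Sum.inl u, hu⟩ ⟨Sum.inr S, hSmem⟩ := huS
    have h2 : H.Adj ⟨Sum.inr S, hSmem⟩ ⟨Sum.inl v, hv⟩ := hvS
    exact h1.reachable.trans h2.reachable
  -- every vertex reaches an old vertex
  have reach_old : ∀ a : ({w}ᶜ : Set (V ⊕ halfClones V)),
      ∃ (u : V) (hu : Sum.inl u ∈ ({w}ᶜ : Set (V ⊕ halfClones V))),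
        H.Reachable a ⟨Sum.inl u, hu⟩ := by
    rintro ⟨(u | S), ha⟩
    · exact ⟨u, ha, Reachable.refl _⟩
    · obtain ⟨u, huS, huw⟩ := exists_mem_clone_ne hV S w
      have hum := memc _ huw
      have hadj : H.Adj ⟨Sum.inr S, ha⟩ ⟨Sum.inl u, hum⟩ := huS
      exact ⟨u, hum, hadj.reachable⟩
  rw [connected_iff]
  constructor
  · rintro a b
    obtain ⟨u, hu, hau⟩ := reach_old a
    obtain ⟨v, hv, hbv⟩ := reach_old b
    exact hau.trans ((key u v hu hv).trans hbv.symm)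
  · have h1 : 1 < Fintype.card V := by omega
    obtain ⟨u, v, huv⟩ := Fintype.exists_pair_of_one_lt_card h1
    by_cases hu : Sum.inl u ≠ w
    · exact ⟨⟨Sum.inl u, memc _ hu⟩⟩
    · push_neg at hu
      have : Sum.inl v ≠ w := by
        rw [← hu]
        simp [huv.symm]
      exact ⟨⟨Sum.inl v, memc _ this⟩⟩

end Aux

lemma FinGraph.order_step (X : FinGraph) :
    X.step.order = X.order + (X.order).choose (X.order / 2) := by
  letI := X.fin
  letI := X.dec
  show Fintype.card (X.V ⊕ halfClones X.V) = _
  rw [Fintype.card_sum, Fintype.card_finset_len]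
  rfl

lemma FinGraph.two_mul_order_le (X : FinGraph) (h : 1 ≤ X.order) :
    2 * X.order ≤ X.step.order := by
  rw [X.order_step]
  have hle : X.order ≤ (X.order).choose (X.order / 2) := by
    rcases Nat.lt_or_ge X.order 2 with h2 | h2
    · interval_cases h' : X.order; simp_all
    · calc X.order = (X.order).choose 1 := (Nat.choose_one_right _).symm
        _ ≤ (X.order).choose (X.order / 2) := Nat.choose_le_middle 1 X.order
  omega

lemma FinGraph.order_iterate (X : FinGraph) (h : 1 ≤ X.order) (k : ℕ) :
    2 ^ k ≤ (FinGraph.step^[k] X).order := by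
  induction k with
  | zero => simpa using h
  | succ k ih =>
    rw [Function.iterate_succ_apply']
    have h1 : 1 ≤ (FinGraph.step^[k] X).order := le_trans (Nat.one_le_two_pow) ih
    have := (FinGraph.step^[k] X).two_mul_order_le h1
    calc 2 ^ (k + 1) = 2 * 2 ^ k := by ring
      _ ≤ 2 * (FinGraph.step^[k] X).order := by omega
      _ ≤ _ := this

lemma FinGraph.step_twoConnected (X : FinGraph) (h6 : 6 ≤ X.order) :
    X.step.TwoConnected := by
  letI := X.fin
  letI := X.dec
  have h6' : 6 ≤ Fintype.card X.V := h6
  constructor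
  · show 3 ≤ Fintype.card (X.V ⊕ halfClones X.V)
    rw [Fintype.card_sum]
    omega
  · intro w
    exact halfStep_del_connected X.G h6' w

/-- starting from any finite graph with at least one vertex, the iterated
half-model graph `G_t` is 2-connected for every `t ≥ 4`. -/
theorem stmt_7 (X : FinGraph) (h : 1 ≤ X.order) :
    ∀ t : ℕ, 4 ≤ t → (FinGraph.step^[t] X).TwoConnected := by
  intro t ht
  obtain ⟨s, rfl⟩ : ∃ s, t = s + 1 := ⟨t - 1, by omega⟩
  rw [Function.iterate_succ_apply']
  apply FinGraph.step_twoConnected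
  have h8 : 2 ^ 3 ≤ 2 ^ s := Nat.pow_le_pow_right (by norm_num) (by omega)
  have := X.order_iterate h s
  omega
end

section
/- Let G be a finite 2-connected simple graph with n ≥ 4 vertices and let H = H(G) be the graph obtained from G by one step of the half-model. Then the diameter of H is at most 3; that is, any two vertices of H are joined by a path of length at most 3. -/
open SimpleGraph

section Aux

variable {V : Type} [Fintype V] [DecidableEq V]

lemma my_crossing {V : Type} (G : SimpleGraph V) (S : Finset V) [DecidableEq V] :
    ∀ {a b : V} (w : G.Walk a b), a ∉ S → b ∈ S →
      ∃ x y, x ∈ w.support ∧ G.Adj x y ∧ x ∉ S ∧ y ∈ S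
  | a, _, SimpleGraph.Walk.nil, ha, hb => absurd hb ha
  | a, b, SimpleGraph.Walk.cons (v := c) h p, ha, hb => by
    by_cases hc : c ∈ S
    · exact ⟨a, c, by simp, h, ha, hc⟩
    · obtain ⟨x, y, hx, hxy, hxs, hys⟩ := my_crossing G S p hc hb
      exact ⟨x, y, by simp [hx], hxy, hxs, hys⟩

def myIncl (G : SimpleGraph V) (s : Set V) : (G.induce s) →g G :=
  ⟨Subtype.val, fun {a b} h => h⟩

end Aux
/-- if `G` is 2-connected with at least `4` vertices, then any two
vertices of `H = H(G)` are joined by a path of length at most `3`: `H` has diameter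
at most `3`. -/
theorem stmt_8 {V : Type} [Fintype V] [DecidableEq V] (G : SimpleGraph V)
    (hn : 4 ≤ Fintype.card V)
    (h2c : 3 ≤ Fintype.card V ∧ ∀ w : V, (G.induce ({w}ᶜ : Set V)).Connected) :
    ∀ x y : V ⊕ halfClones V,
      ∃ p : (halfStep G).Walk x y, p.IsPath ∧ p.length ≤ 3 := by
  have hhalf2 : 2 ≤ Fintype.card V / 2 := by omega
  have clone : ∀ u v : V, ∃ S : halfClones V, u ∈ S.1 ∧ v ∈ S.1 := by
    intro u v
    obtain ⟨T, hsub, hcard⟩ := Finset.exists_superset_card_eq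
      (s := ({u, v} : Finset V)) (n := Fintype.card V / 2)
      (le_trans (Finset.card_insert_le _ _) (by simp; omega))
      (le_trans (Nat.div_le_self _ _) (by simp [Finset.card_univ]))
    exact ⟨⟨T, hcard⟩, hsub (by simp), hsub (by simp)⟩
  have hSne : ∀ S : halfClones V, S.1.Nonempty := by
    intro S
    rw [← Finset.card_pos, S.2]; omega
  have main : ∀ (u : V) (S : halfClones V),
      ∃ p : (halfStep G).Walk (Sum.inl u) (Sum.inr S), p.IsPath ∧ p.length ≤ 3 := by
    intro u S
    by_cases hu : u ∈ S.1
    · exact ⟨SimpleGraph.Walk.cons (show (halfStep G).Adj (Sum.inl u) (Sum.inr S) from hu)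
        SimpleGraph.Walk.nil, by simp, by simp⟩
    · obtain ⟨w, hw⟩ := hSne S
      obtain ⟨T, huT, hwT⟩ := clone u w
      have hne : T ≠ S := fun h => hu (h ▸ huT)
      have huw : u ≠ w := fun h => hu (h ▸ hw)
      refine ⟨SimpleGraph.Walk.cons (show (halfStep G).Adj (Sum.inl u) (Sum.inr T) from huT)
        (SimpleGraph.Walk.cons (show (halfStep G).Adj (Sum.inr T) (Sum.inl w) from hwT)
        (SimpleGraph.Walk.cons (show (halfStep G).Adj (Sum.inl w) (Sum.inr S) from hw)
        SimpleGraph.Walk.nil)), ?_, by simp⟩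
      simp [SimpleGraph.Walk.isPath_def, huw, hne, Subtype.ext_iff.ne]

  rintro (u | S) (v | T)
  · by_cases huv : u = v
    · subst huv; exact ⟨SimpleGraph.Walk.nil, by simp, by simp⟩
    · obtain ⟨S, hu, hv⟩ := clone u v
      refine ⟨SimpleGraph.Walk.cons (show (halfStep G).Adj (Sum.inl u) (Sum.inr S) from hu)
        (SimpleGraph.Walk.cons (show (halfStep G).Adj (Sum.inr S) (Sum.inl v) from hv)
        SimpleGraph.Walk.nil), ?_, by simp⟩
      simp [SimpleGraph.Walk.isPath_def, huv]
  · exact main u T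
  · obtain ⟨p, hp, hl⟩ := main v S
    exact ⟨p.reverse, hp.reverse, by simpa using hl⟩
  · by_cases hST : S = T
    · subst hST; exact ⟨SimpleGraph.Walk.nil, by simp, by simp⟩
    · by_cases hint : (S.1 ∩ T.1).Nonempty
      · obtain ⟨w, hw⟩ := hint
        rw [Finset.mem_inter] at hw
        refine ⟨SimpleGraph.Walk.cons (show (halfStep G).Adj (Sum.inr S) (Sum.inl w) from hw.1)
          (SimpleGraph.Walk.cons (show (halfStep G).Adj (Sum.inl w) (Sum.inr T) from hw.2)
          SimpleGraph.Walk.nil), ?_, by simp⟩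
        simp [SimpleGraph.Walk.isPath_def, hST]
      · -- disjoint case
        have hdisj : ∀ x, x ∈ T.1 → x ∉ S.1 := by
          intro x hxT hxS
          exact hint ⟨x, Finset.mem_inter.mpr ⟨hxS, hxT⟩⟩
        obtain ⟨a, haT⟩ := hSne T
        obtain ⟨b, hbS⟩ := hSne S
        -- find z
        have hz : ∃ z : V, z ∉ S.1 ∧ z ≠ a ∧ ∀ x, x ∉ S.1 → x ≠ z → x ∈ T.1 := by
          by_cases hc : (S.1ᶜ \ T.1).Nonempty
          · obtain ⟨z, hzm⟩ := hc
            rw [Finset.mem_sdiff, Finset.mem_compl] at hzm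
            have hins : insert z T.1 ⊆ S.1ᶜ := by
              intro x hx
              rw [Finset.mem_insert] at hx
              rcases hx with h | h
              · exact h ▸ Finset.mem_compl.mpr hzm.1
              · exact Finset.mem_compl.mpr (hdisj x h)
            have hcard : S.1ᶜ.card ≤ (insert z T.1).card := by
              rw [Finset.card_compl, S.2, Finset.card_insert_of_notMem hzm.2, T.2]
              omega
            have heq : insert z T.1 = S.1ᶜ := Finset.eq_of_subset_of_card_le hins hcard
            refine ⟨z, hzm.1, fun h => hzm.2 (h ▸ haT), fun x hxS hxz => ?_⟩
            have : x ∈ insert z T.1 := heq ▸ Finset.mem_compl.mpr hxS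
            rcases Finset.mem_insert.mp this with h | h
            · exact absurd h hxz
            · exact h
          · have hsub : S.1ᶜ ⊆ T.1 := by
              intro x hx
              by_contra hxT
              exact hc ⟨x, Finset.mem_sdiff.mpr ⟨hx, hxT⟩⟩
            have : 1 < T.1.card := by rw [T.2]; omega
            obtain ⟨z, hzT, hza⟩ := Finset.exists_mem_ne this a
            exact ⟨z, hdisj z hzT, hza, fun x hxS _ => hsub (Finset.mem_compl.mpr hxS)⟩
        obtain ⟨z, hzS, hza, hkey⟩ := hz
        have hbz : b ≠ z := fun h => hzS (h ▸ hbS)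
        have haS : a ∉ S.1 := hdisj a haT
        obtain ⟨w0⟩ := ((h2c.2 z).preconnected ⟨a, by simp [Ne.symm hza]⟩ ⟨b, by simp [hbz]⟩)
        have := my_crossing G S.1 (w0.map (myIncl G ({z}ᶜ : Set V))) haS hbS
        obtain ⟨x, y, hx, hxy, hxS, hyS⟩ := this
        have hxz : x ≠ z := by
          rw [SimpleGraph.Walk.support_map, List.mem_map] at hx
          obtain ⟨c, _, rfl⟩ := hx
          exact c.2
        have hxT : x ∈ T.1 := hkey x hxS hxz
        refine ⟨SimpleGraph.Walk.cons (show (halfStep G).Adj (Sum.inr S) (Sum.inl y) from hyS)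
          (SimpleGraph.Walk.cons (show (halfStep G).Adj (Sum.inl y) (Sum.inl x) from hxy.symm)
          (SimpleGraph.Walk.cons (show (halfStep G).Adj (Sum.inl x) (Sum.inr T) from hxT)
          SimpleGraph.Walk.nil)), ?_, by simp⟩
        simp [SimpleGraph.Walk.isPath_def, hST, hxy.ne']
end

section
/- Let G_0 be a finite simple graph with at least 4 vertices, and let (G_t) be the iterated half-model sequence starting from G_0. Then for every t ≥ 5, the diameter of G_t is at most 3. -/
open SimpleGraph

section Half
variable {V : Type} [Fintype V] [DecidableEq V]

/-- Crossing property: any two disjoint half-size sets have an edge between them. -/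
def CrossProp (G : SimpleGraph V) : Prop :=
  ∀ S T : Finset V, S.card = Fintype.card V / 2 → T.card = Fintype.card V / 2 →
    Disjoint S T → ∃ x ∈ S, ∃ y ∈ T, G.Adj x y

lemma choose_half_ge (m : ℕ) (hm : 4 ≤ m) : m + 2 ≤ Nat.choose m (m / 2) := by
  have h1 : Nat.choose m 2 ≤ Nat.choose m (m / 2) := Nat.choose_le_middle 2 m
  have h2 : Nat.choose m 2 = m * (m - 1) / 2 := Nat.choose_two_right m
  obtain ⟨n, rfl⟩ : ∃ n, m = n + 4 := ⟨m - 4, by omega⟩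
  have h3 : (n + 4) * (n + 4 - 1) = n * n + 7 * n + 12 := by
    have h4 : n + 4 - 1 = n + 3 := by omega
    rw [h4]; ring
  omega

lemma lemA (G : SimpleGraph V) (hm : 4 ≤ Fintype.card V) : CrossProp (halfStep G) := by
  intro S T hS hT hdis
  by_contra hcon
  push_neg at hcon
  set m := Fintype.card V with hmdef
  have hk2 : 2 ≤ m / 2 := by omega
  have hkm : m / 2 ≤ m := Nat.div_le_self _ _
  have hN : Fintype.card (V ⊕ halfClones V) = m + Nat.choose m (m / 2) := by
    simp [hmdef]
  set N := Fintype.card (V ⊕ halfClones V) with hNdef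
  have hchoose := choose_half_ge m hm
  have hK : m + 1 ≤ N / 2 := by omega
  have hST : (S ∪ T).card = 2 * (N / 2) := by
    rw [Finset.card_union_of_disjoint hdis, hS, hT]; omega
  have hmiss : (Finset.univ \ (S ∪ T)).card ≤ 1 := by
    rw [Finset.card_sdiff_of_subset (Finset.subset_univ _), Finset.card_univ, hST]
    omega
  have at_most_one : ∀ x y : V ⊕ halfClones V, x ∉ S → x ∉ T → y ∉ S → y ∉ T → x = y := by
    intro x y hx1 hx2 hy1 hy2
    refine Finset.card_le_one.mp hmiss x ?_ y ?_ <;> simp_all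
  have hsup : ∀ s : Finset V, s.card ≤ m / 2 → ∃ Z : halfClones V, s ⊆ Z.1 := by
    intro s hs
    obtain ⟨t, hst, htc⟩ := Finset.exists_superset_card_eq hs hkm
    exact ⟨⟨t, htc⟩, hst⟩
  have hsup' : ∀ (a : V) (s : Finset V), a ∉ s → s.card ≤ m / 2 →
      ∃ Z : halfClones V, s ⊆ Z.1 ∧ a ∉ Z.1 := by
    intro a s ha hs
    have h1 : s ⊆ Finset.univ.erase a := fun x hx =>
      Finset.mem_erase.mpr ⟨fun h => ha (h ▸ hx), Finset.mem_univ _⟩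
    have h2 : m / 2 ≤ (Finset.univ.erase a).card := by
      rw [Finset.card_erase_of_mem (Finset.mem_univ _), Finset.card_univ]; omega
    obtain ⟨t, hst, hta, htc⟩ := Finset.exists_subsuperset_card_eq h1 hs h2
    exact ⟨⟨t, htc⟩, hst, fun h => (Finset.mem_erase.mp (hta h)).1 rfl⟩
  have cmiss : ∀ Z : halfClones V, (∃ x, Sum.inl x ∈ S ∧ x ∈ Z.1) →
      (∃ y, Sum.inl y ∈ T ∧ y ∈ Z.1) → Sum.inr Z ∉ S ∧ Sum.inr Z ∉ T := by
    rintro Z ⟨x, hxS, hxZ⟩ ⟨y, hyT, hyZ⟩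
    constructor
    · intro hZS; exact hcon _ hZS _ hyT hyZ
    · intro hZT; exact hcon _ hxS _ hZT hxZ
  have clone_in : ∀ A : Finset (V ⊕ halfClones V), A.card = N / 2 →
      ∃ c : halfClones V, Sum.inr c ∈ A := by
    intro A hA
    by_contra hc
    push_neg at hc
    have hsub : A ⊆ Finset.univ.image Sum.inl := by
      intro x hx
      match x with
      | Sum.inl u => exact Finset.mem_image.mpr ⟨u, Finset.mem_univ _, rfl⟩
      | Sum.inr c => exact absurd hx (hc c)
    have h1 := Finset.card_le_card hsub
    have h2 : (Finset.univ.image (Sum.inl : V → V ⊕ halfClones V)).card ≤ m := by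
      refine le_trans Finset.card_image_le ?_
      rw [Finset.card_univ]
    omega
  have old_in : ∀ A B : Finset (V ⊕ halfClones V),
      (A = S ∧ B = T) ∨ (A = T ∧ B = S) → ∃ u : V, Sum.inl u ∈ A := by
    rintro A B hor
    have hA : A.card = N / 2 := by rcases hor with ⟨rfl, rfl⟩ | ⟨rfl, rfl⟩ <;> assumption
    obtain ⟨c, hc⟩ := clone_in A hA
    have hc2 : 1 < c.1.card := by rw [c.2]; omega
    obtain ⟨w1, hw1, w2, hw2, hww⟩ := Finset.one_lt_card.mp hc2
    have hnB : ∀ w ∈ c.1, Sum.inl w ∉ B := by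
      intro w hw hwB
      rcases hor with ⟨rfl, rfl⟩ | ⟨rfl, rfl⟩
      · exact hcon _ hc _ hwB hw
      · exact hcon _ hwB _ hc hw
    by_contra hno
    push_neg at hno
    have h1 : (Sum.inl w1 : V ⊕ halfClones V) ∉ S ∧ (Sum.inl w1 : V ⊕ halfClones V) ∉ T := by
      rcases hor with ⟨rfl, rfl⟩ | ⟨rfl, rfl⟩
      · exact ⟨hno w1, hnB w1 hw1⟩
      · exact ⟨hnB w1 hw1, hno w1⟩
    have h2 : (Sum.inl w2 : V ⊕ halfClones V) ∉ S ∧ (Sum.inl w2 : V ⊕ halfClones V) ∉ T := by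
      rcases hor with ⟨rfl, rfl⟩ | ⟨rfl, rfl⟩
      · exact ⟨hno w2, hnB w2 hw2⟩
      · exact ⟨hnB w2 hw2, hno w2⟩
    exact hww (Sum.inl.inj (at_most_one _ _ h1.1 h1.2 h2.1 h2.2))
  obtain ⟨u, huS⟩ := old_in S T (Or.inl ⟨rfl, rfl⟩)
  obtain ⟨v, hvT⟩ := old_in T S (Or.inr ⟨rfl, rfl⟩)
  have huv : u ≠ v := fun h => Finset.disjoint_left.mp hdis huS (h ▸ hvT)
  have old_all : ∀ a : V, Sum.inl a ∈ S ∨ Sum.inl a ∈ T := by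
    intro a
    by_contra hA
    push_neg at hA
    obtain ⟨Z0, hZ0⟩ := hsup {u, v} (by rw [Finset.card_pair huv]; omega)
    have hZm := cmiss Z0 ⟨u, huS, hZ0 (by simp)⟩ ⟨v, hvT, hZ0 (by simp)⟩
    exact absurd (at_most_one _ _ hZm.1 hZm.2 hA.1 hA.2) (by simp)
  have hvmem : v ∈ Finset.univ.erase u := Finset.mem_erase.mpr ⟨Ne.symm huv, Finset.mem_univ _⟩
  have hcard2 : 1 < ((Finset.univ.erase u).erase v).card := by
    rw [Finset.card_erase_of_mem hvmem, Finset.card_erase_of_mem (Finset.mem_univ _),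
      Finset.card_univ]
    omega
  obtain ⟨a, ha, b, hb, hab⟩ := Finset.one_lt_card.mp hcard2
  simp only [Finset.mem_erase, Finset.mem_univ, and_true] at ha hb
  have mk : ∀ p q : V, p ≠ u → p ≠ v → q ≠ u → q ≠ v → q ≠ p →
      ∃ Z : halfClones V, p ∈ Z.1 ∧ q ∉ Z.1 ∧ Sum.inr Z ∉ S ∧ Sum.inr Z ∉ T := by
    intro p q hpu hpv hqu hqv hqp
    rcases old_all p with hpS | hpT
    · obtain ⟨Z, hZsub, hZq⟩ := hsup' q {v, p} (by simp [hqv, hqp])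
        (le_trans (Finset.card_insert_le _ _) (by simp; omega))
      have hmZ := cmiss Z ⟨p, hpS, hZsub (by simp)⟩ ⟨v, hvT, hZsub (by simp)⟩
      exact ⟨Z, hZsub (by simp), hZq, hmZ.1, hmZ.2⟩
    · obtain ⟨Z, hZsub, hZq⟩ := hsup' q {u, p} (by simp [hqu, hqp])
        (le_trans (Finset.card_insert_le _ _) (by simp; omega))
      have hmZ := cmiss Z ⟨u, huS, hZsub (by simp)⟩ ⟨p, hpT, hZsub (by simp)⟩
      exact ⟨Z, hZsub (by simp), hZq, hmZ.1, hmZ.2⟩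
  obtain ⟨Za, hZa1, _, hZa3, hZa4⟩ := mk a b ha.2 ha.1 hb.2 hb.1 (Ne.symm hab)
  obtain ⟨Zb, _, hZb2, hZb3, hZb4⟩ := mk b a hb.2 hb.1 ha.2 ha.1 hab
  have hZZ : Za = Zb := Sum.inr.inj (at_most_one _ _ hZa3 hZa4 hZb3 hZb4)
  exact hZb2 (hZZ ▸ hZa1)

lemma lemB (G : SimpleGraph V) (hm : 4 ≤ Fintype.card V) (hcr : CrossProp G) :
    ∀ x y : V ⊕ halfClones V,
      ∃ p : (halfStep G).Walk x y, p.IsPath ∧ p.length ≤ 3 := by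
  set m := Fintype.card V with hmdef
  have hk2 : 2 ≤ m / 2 := by omega
  have hkm : m / 2 ≤ m := Nat.div_le_self _ _
  have hsup : ∀ s : Finset V, s.card ≤ m / 2 → ∃ Z : halfClones V, s ⊆ Z.1 := by
    intro s hs
    obtain ⟨t, hst, htc⟩ := Finset.exists_superset_card_eq hs hkm
    exact ⟨⟨t, htc⟩, hst⟩
  -- old-to-clone paths
  have aux : ∀ (u : V) (T : halfClones V),
      ∃ p : (halfStep G).Walk (Sum.inl u) (Sum.inr T), p.IsPath ∧ p.length ≤ 3 := by
    intro u T
    by_cases h : u ∈ T.1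
    · exact ⟨Walk.cons (show (halfStep G).Adj (Sum.inl u) (Sum.inr T) from h) Walk.nil,
        by simp [Walk.isPath_def], by simp⟩
    · have hT : T.1.Nonempty := Finset.card_pos.mp (by rw [T.2]; omega)
      obtain ⟨v, hv⟩ := hT
      have huv : u ≠ v := fun e => h (e ▸ hv)
      obtain ⟨Z, hZ⟩ := hsup {u, v} (by rw [Finset.card_pair huv]; omega)
      have hZT : Z ≠ T := fun e => h (e ▸ hZ (by simp))
      refine ⟨Walk.cons (show (halfStep G).Adj (Sum.inl u) (Sum.inr Z) from hZ (by simp))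
        (Walk.cons (show (halfStep G).Adj (Sum.inr Z) (Sum.inl v) from hZ (by simp))
        (Walk.cons (show (halfStep G).Adj (Sum.inl v) (Sum.inr T) from hv) Walk.nil)),
        ?_, by simp⟩
      simp [Walk.isPath_def, huv, hZT]
  rintro (u | S) (v | T)
  · by_cases h : u = v
    · subst h; exact ⟨Walk.nil, Walk.IsPath.nil, by simp⟩
    · obtain ⟨Z, hZ⟩ := hsup {u, v} (by rw [Finset.card_pair h]; omega)
      refine ⟨Walk.cons (show (halfStep G).Adj (Sum.inl u) (Sum.inr Z) from hZ (by simp))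
        (Walk.cons (show (halfStep G).Adj (Sum.inr Z) (Sum.inl v) from hZ (by simp))
        Walk.nil), ?_, by simp⟩
      simp [Walk.isPath_def, h]
  · exact aux u T
  · obtain ⟨p, hp, hl⟩ := aux v S
    exact ⟨p.reverse, hp.reverse, by simpa using hl⟩
  · by_cases hST : S = T
    · subst hST; exact ⟨Walk.nil, Walk.IsPath.nil, by simp⟩
    · by_cases hint : ∃ w, w ∈ S.1 ∧ w ∈ T.1
      · obtain ⟨w, hwS, hwT⟩ := hint
        refine ⟨Walk.cons (show (halfStep G).Adj (Sum.inr S) (Sum.inl w) from hwS)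
          (Walk.cons (show (halfStep G).Adj (Sum.inl w) (Sum.inr T) from hwT)
          Walk.nil), ?_, by simp⟩
        simp [Walk.isPath_def, hST]
      · push_neg at hint
        have hdis : Disjoint S.1 T.1 := Finset.disjoint_left.mpr fun w hw hw' => hint w hw hw'
        obtain ⟨x, hx, y, hy, hadj⟩ := hcr S.1 T.1 S.2 T.2 hdis
        have hxy : x ≠ y := hadj.ne
        refine ⟨Walk.cons (show (halfStep G).Adj (Sum.inr S) (Sum.inl x) from hx)
          (Walk.cons (show (halfStep G).Adj (Sum.inl x) (Sum.inl y) from hadj)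
          (Walk.cons (show (halfStep G).Adj (Sum.inl y) (Sum.inr T) from hy)
          Walk.nil)), ?_, by simp⟩
        simp [Walk.isPath_def, hST, hxy]

end Half

lemma FinGraph.order_le_step (X : FinGraph) : X.order ≤ X.step.order := by
  letI := X.fin
  letI := X.dec
  show Fintype.card X.V ≤ Fintype.card (X.V ⊕ halfClones X.V)
  rw [Fintype.card_sum]
  omega


/-- starting from any finite graph with at least `4` vertices, for every
`t ≥ 5` the iterated half-model graph `G_t` has diameter at most `3`: any two of its
vertices are joined by a path of length at most `3`. -/
theorem stmt_9 (X : FinGraph) (h : 4 ≤ X.order) :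
    ∀ t : ℕ, 5 ≤ t → ∀ x y : (FinGraph.step^[t] X).V,
      ∃ p : (FinGraph.step^[t] X).G.Walk x y, p.IsPath ∧ p.length ≤ 3 := by
  have horder : ∀ n, 4 ≤ (FinGraph.step^[n] X).order := by
    intro n
    induction n with
    | zero => simpa using h
    | succ n ih =>
      rw [Function.iterate_succ_apply']
      exact le_trans ih (FinGraph.order_le_step _)
  intro t ht
  obtain ⟨k, rfl⟩ : ∃ k, t = k + 2 := ⟨t - 2, by omega⟩
  rw [show FinGraph.step^[k+2] X = ((FinGraph.step^[k] X).step).step by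
    rw [Function.iterate_succ_apply', Function.iterate_succ_apply']]
  set Y := FinGraph.step^[k] X with hY
  letI := Y.fin
  letI := Y.dec
  have hYo : 4 ≤ Fintype.card Y.V := horder k
  have hcr : CrossProp (halfStep Y.G) := lemA Y.G hYo
  have hm2 : 4 ≤ Fintype.card (Y.V ⊕ halfClones Y.V) := by
    rw [Fintype.card_sum]; omega
  exact lemB (halfStep Y.G) hm2 hcr
end
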